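/- Let τ : ℤ³ → ℂ be nowhere zero and satisfy the bilinear equation (3.4b) at level n+1: q'*τ̂̂ₜ*τ̂ᵦ - p'*τ̂ₜ*τ̂̂ᵦ - τ̂̂*τ̂ₜᵦ = 0 (n+1 shift of q*τ̂ₜ*τ̄ - p*τₜ*τ̂ᵦ = τ̂*τₜᵦ) and (3.4a) at level n: p*τ̂ₜ*τ̄ - q*τₜ*τ̂ᵦ + τ*τ̂ₜᵦ = 0, where p' = p_{l,n+1}, q' = q_{m,n+1}. Define ω = τ̂/τ and shifts accordingly. Then ω*ω̂/(ω̄*ω̃) = (p'*ω̂ᵦ - q'*ω̂ₜ)/(p*ω̃ - q*ω̄), where ω̂ = τ̂̂/τ̂, ω̂ᵦ = τ̂̂ᵦ/τ̂ᵦ, ω̂ₜ = τ̂̂ₜ/τ̂ₜ. -/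

import Mathlib

/-- Lemma C.1, equation (C.3b): from the bilinear equation (3.4b) at level
`n+1` and (3.4a) at level `n`, the function `ω = τ̂/τ` satisfies
`ω ω̂/(ω̄ ω̃) = (p' ω̂ᵦ - q' ω̂ₜ)/(p ω̃ - q ω̄)`. -/
theorem tau_function_second_relation
    (τ : ℤ → ℤ → ℤ → ℂ) (l m n : ℤ) (p q p' q' : ℂ)
    (hτ : ∀ i j k : ℤ, τ i j k ≠ 0)
    (hbilb : q' * τ l (m + 1) (n + 2) * τ (l + 1) m (n + 1) -
        p' * τ l (m + 1) (n + 1) * τ (l + 1) m (n + 2) -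
        τ l m (n + 2) * τ (l + 1) (m + 1) (n + 1) = 0)
    (hbila : p * τ l (m + 1) (n + 1) * τ (l + 1) m n -
        q * τ l (m + 1) n * τ (l + 1) m (n + 1) +
        τ l m n * τ (l + 1) (m + 1) (n + 1) = 0)
    (hden : p * (τ l (m + 1) (n + 1) / τ l (m + 1) n) -
        q * (τ (l + 1) m (n + 1) / τ (l + 1) m n) ≠ 0) :
    ((τ l m (n + 1) / τ l m n) * (τ l m (n + 2) / τ l m (n + 1))) /
      ((τ (l + 1) m (n + 1) / τ (l + 1) m n) * (τ l (m + 1) (n + 1) / τ l (m + 1) n)) =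
    (p' * (τ (l + 1) m (n + 2) / τ (l + 1) m (n + 1)) -
        q' * (τ l (m + 1) (n + 2) / τ l (m + 1) (n + 1))) /
      (p * (τ l (m + 1) (n + 1) / τ l (m + 1) n) -
        q * (τ (l + 1) m (n + 1) / τ (l + 1) m n)) := by
  have h1 := hτ l m n
  have h2 := hτ l m (n+1)
  have h3 := hτ l m (n+2)
  have h4 := hτ (l+1) m n
  have h5 := hτ (l+1) m (n+1)
  have h6 := hτ (l+1) m (n+2)
  have h7 := hτ l (m+1) n
  have h9 := hτ l (m+1) (n+1)
  have h10 := hτ l (m+1) (n+2)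
  have h11 := hτ (l+1) (m+1) (n+1)
  have hnum : p' * (τ (l + 1) m (n + 2) / τ (l + 1) m (n + 1)) -
      q' * (τ l (m + 1) (n + 2) / τ l (m + 1) (n + 1)) =
      -(τ l m (n + 2) * τ (l + 1) (m + 1) (n + 1)) /
        (τ l (m + 1) (n + 1) * τ (l + 1) m (n + 1)) := by
    field_simp
    linear_combination -hbilb
  have hd : p * (τ l (m + 1) (n + 1) / τ l (m + 1) n) -
      q * (τ (l + 1) m (n + 1) / τ (l + 1) m n) =
      -(τ l m n * τ (l + 1) (m + 1) (n + 1)) / (τ l (m + 1) n * τ (l + 1) m n) := by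
    field_simp
    linear_combination hbila
  rw [hnum, hd]
  field_simp
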